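/- For s > 0, g > 0, δ > 2, and 0 < b < c, the integral 2∫_b^c (1 − exp(−s g v^{−δ})) v dv equals Λ(s,b,c) − Θ(s,b,c), where Λ(s,b,c) = c²(1 − e^{−sgc^{−δ}}) − b²(1 − e^{−sgb^{−δ}}) and Θ(s,b,c) = (sg)^{2/δ}·(Γ(1−2/δ, sgb^{−δ}) − Γ(1−2/δ, sgc^{−δ})). -/

import Mathlib

open Real MeasureTheory Set

/-- The upper incomplete Gamma function Γ(s,x) = ∫_x^∞ t^{s−1} e^{−t} dt. -/
noncomputable def uGamma (s x : ℝ) : ℝ := ∫ t in Set.Ioi x, t ^ (s - 1) * Real.exp (-t)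

lemma uGamma_hasDerivAt {a : ℝ} (ha : 0 < a) {x : ℝ} (hx : 0 < x) :
    HasDerivAt (uGamma a) (-(x ^ (a - 1) * Real.exp (-x))) x := by
  set f : ℝ → ℝ := fun t => t ^ (a - 1) * Real.exp (-t) with hf
  have hint : IntegrableOn f (Set.Ioi 0) :=
    (Real.GammaIntegral_convergent ha).congr_fun
      (fun t _ => mul_comm _ _) measurableSet_Ioi
  have hmeas : Measurable f := (measurable_id.pow_const _).mul (measurable_id.neg.exp)
  have key : ∀ y ∈ Set.Ioi (0:ℝ),
      uGamma a y = (∫ t in Set.Ioi (0:ℝ), f t) - ∫ t in (0:ℝ)..y, f t := by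
    intro y hy
    rw [uGamma, intervalIntegral.integral_of_le (le_of_lt hy), eq_sub_iff_add_eq, add_comm,
      ← setIntegral_union (Ioc_disjoint_Ioi le_rfl) measurableSet_Ioi
        (hint.mono_set Ioc_subset_Ioi_self) (hint.mono_set (Ioi_subset_Ioi (le_of_lt hy))),
      Ioc_union_Ioi_eq_Ioi (le_of_lt hy)]
  have hcont : ContinuousAt f x := by
    exact ((Real.continuousAt_rpow_const x _ (Or.inl hx.ne')).mul
      ((Real.continuous_exp.comp continuous_neg).continuousAt))
  have h1 : HasDerivAt (fun y => ∫ t in (0:ℝ)..y, f t) (f x) x := by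
    refine intervalIntegral.integral_hasDerivAt_right ?_ ?_ hcont
    · rw [intervalIntegrable_iff_integrableOn_Ioc_of_le hx.le]
      exact hint.mono_set Ioc_subset_Ioi_self
    · exact hmeas.aestronglyMeasurable.stronglyMeasurableAtFilter
  have h2 : HasDerivAt (fun y => (∫ t in Set.Ioi (0:ℝ), f t) - ∫ t in (0:ℝ)..y, f t)
      (-(f x)) x := by
    have := (hasDerivAt_const x (∫ t in Set.Ioi (0:ℝ), f t)).sub h1
    rw [zero_sub] at this
    exact this
  refine h2.congr_of_eventuallyEq ?_
  filter_upwards [Ioi_mem_nhds hx] with y hy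
  exact key y hy

/-- Closed-form evaluation of the annular interference integral:
2∫_b^c (1 − e^{−sgv^{−δ}}) v dv = Λ(s,b,c) − Θ(s,b,c). -/
theorem stmt_6 (s g δ b c : ℝ) (hs : 0 < s) (hg : 0 < g) (hδ : 2 < δ)
    (hb : 0 < b) (hbc : b < c) :
    2 * ∫ v in b..c, (1 - Real.exp (-(s * g) * v ^ (-δ))) * v
      = (c ^ 2 * (1 - Real.exp (-(s * g) * c ^ (-δ)))
          - b ^ 2 * (1 - Real.exp (-(s * g) * b ^ (-δ))))
        - (s * g) ^ (2 / δ) *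
            (uGamma (1 - 2 / δ) (s * g * b ^ (-δ)) - uGamma (1 - 2 / δ) (s * g * c ^ (-δ))) := by
  have hδ0 : (0:ℝ) < δ := by linarith
  set A := s * g with hAdef
  have hA : 0 < A := mul_pos hs hg
  have ha : 0 < 1 - 2 / δ := by
    have : 2 / δ < 1 := (div_lt_one hδ0).mpr hδ
    linarith
  set a : ℝ := 1 - 2 / δ with haa
  set F : ℝ → ℝ := fun v => v ^ 2 * (1 - Real.exp (-A * v ^ (-δ)))
      + A ^ (2 / δ) * uGamma a (A * v ^ (-δ)) with hFdef
  have hpos : ∀ v ∈ Set.uIcc b c, 0 < v := by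
    intro v hv
    rw [Set.uIcc_of_le hbc.le] at hv
    exact lt_of_lt_of_le hb hv.1
  have hderiv : ∀ v ∈ Set.uIcc b c,
      HasDerivAt F (2 * ((1 - Real.exp (-A * v ^ (-δ))) * v)) v := by
    intro v hv
    have hv0 : 0 < v := hpos v hv
    have h1 : HasDerivAt (fun v : ℝ => v ^ (-δ)) (-δ * v ^ (-δ - 1)) v := by
      simpa using Real.hasDerivAt_rpow_const (p := -δ) (Or.inl hv0.ne')
    have h2 : HasDerivAt (fun v : ℝ => A * v ^ (-δ)) (A * (-δ * v ^ (-δ - 1))) v :=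
      h1.const_mul A
    have h2' : HasDerivAt (fun v : ℝ => -A * v ^ (-δ)) (-A * (-δ * v ^ (-δ - 1))) v :=
      h1.const_mul (-A)
    have hE : HasDerivAt (fun v : ℝ => Real.exp (-A * v ^ (-δ)))
        (Real.exp (-A * v ^ (-δ)) * (-A * (-δ * v ^ (-δ - 1)))) v := h2'.exp
    have h3 : HasDerivAt (fun v : ℝ => 1 - Real.exp (-A * v ^ (-δ)))
        (-(Real.exp (-A * v ^ (-δ)) * (-A * (-δ * v ^ (-δ - 1))))) v := by
      have := (hasDerivAt_const v (1:ℝ)).sub hE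
      rw [zero_sub] at this
      exact this
    have hP : HasDerivAt (fun v : ℝ => v ^ 2) (2 * v) v := by
      simpa using hasDerivAt_pow 2 v
    have h4 := hP.mul h3
    have hw : 0 < A * v ^ (-δ) := mul_pos hA (Real.rpow_pos_of_pos hv0 _)
    have hG := (uGamma_hasDerivAt ha hw).comp v h2
    have h5 := hG.const_mul (A ^ (2 / δ))
    have total := h4.add h5
    refine total.congr_deriv (Eq.symm ?_)
    have e1 : (A * v ^ (-δ)) ^ (a - 1) = A ^ (-(2 / δ)) * v ^ (2:ℕ) := by
      have haδ : a - 1 = -(2 / δ) := by rw [haa]; ring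
      rw [haδ, Real.mul_rpow hA.le (Real.rpow_nonneg hv0.le _)]
      congr 1
      rw [← Real.rpow_natCast v 2, ← Real.rpow_mul hv0.le]
      congr 1
      field_simp
      norm_num
    have e2 : A ^ (2 / δ) * A ^ (-(2 / δ)) = 1 := by
      rw [← Real.rpow_add hA]; simp
    rw [e1]
    simp only [neg_mul]
    linear_combination (-(v ^ 2 * Real.exp (-(A * v ^ (-δ))) * (A * (δ * v ^ (-δ - 1))))) * e2
  have hInt : IntervalIntegrable
      (fun v => 2 * ((1 - Real.exp (-A * v ^ (-δ))) * v)) volume b c := by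
    apply ContinuousOn.intervalIntegrable
    intro v hv
    have hv0 : 0 < v := hpos v hv
    apply ContinuousAt.continuousWithinAt
    have hc1 : ContinuousAt (fun v : ℝ => v ^ (-δ)) v :=
      Real.continuousAt_rpow_const v _ (Or.inl hv0.ne')
    exact (continuousAt_const.mul
      (((continuousAt_const.mul hc1).rexp.const_sub 1).mul continuousAt_id))
  have key := intervalIntegral.integral_eq_sub_of_hasDerivAt hderiv hInt
  rw [← intervalIntegral.integral_const_mul] at *
  rw [key, hFdef]
  ring
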